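/- Fix k ≥ 1, ρ ∈ (0,1)^k with Σ_r ρ_r = 1, a symmetric matrix P ∈ (0,1)^{k×k}, and indices i ≠ j in [k] such that P_{ri} ≠ P_{rj} for at least one r ∈ [k]. Let t_0 = 1/Δ_+(θ_i, θ_j). Then: (a) DR_{1/t_0}(i) and DR_{1/t_0}(j) intersect at a single point x*; (b) with H = {x ∈ ℝ^{2k} : ⟨w*, x − x*⟩ ≥ 0}, one has DR_{1/t_0}(i) ⊆ H and DR_{1/t_0}(j) ∩ H = {x*}, i.e., the hyperplane {x : ⟨w*, x − x*⟩ = 0} separates DR_{1/t_0}(i) \ {x*} from DR_{1/t_0}(j) \ {x*}; (c) there exists r > 0 such that the open Euclidean ball of radius r‖w*‖₂ centered at x* + r w* is contained in DR_{1/t_0}(i), and the open Euclidean ball of radius r‖w*‖₂ centered at x* − r w* is contained in DR_{1/t_0}(j); (d) for every t with 0 < t < t_0, the set DR_{1/t}(i) ∩ DR_{1/t}(j) has a non-empty interior (as a subset of ℝ^{2k}). -/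

import Mathlib

open scoped RealInnerProductSpace

/-- The dissonance of `x` relative to community `i` (coordinate `(r,false)` is `x_{1,r}`,
coordinate `(r,true)` is `x_{2,r}`; `0 * Real.log (0 / c) = 0` in Lean, matching the
convention that a term vanishes when the corresponding coordinate is `0`). -/
noncomputable def eta {k : ℕ} (ρ : Fin k → ℝ) (P : Matrix (Fin k) (Fin k) ℝ)
    (i : Fin k) (x : EuclideanSpace ℝ (Fin k × Bool)) : ℝ :=
  (∑ r : Fin k,
    (x (r, false) * Real.log (x (r, false) / (Real.exp 1 * ρ r * P r i))
      + x (r, true) * Real.log (x (r, true) / (Real.exp 1 * ρ r * (1 - P r i))))) + 1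

/-- The δ-dissonance range relative to community `i`. -/
noncomputable def DR {k : ℕ} (ρ : Fin k → ℝ) (P : Matrix (Fin k) (Fin k) ℝ)
    (i : Fin k) (δ : ℝ) : Set (EuclideanSpace ℝ (Fin k × Bool)) :=
  {x | (∀ p, 0 ≤ x p) ∧ eta ρ P i x ≤ δ}

/-- `CH_ξ(μ, ν) = ∑_i [ξ μ_i + (1-ξ) ν_i − μ_i^ξ ν_i^{1-ξ}]`. -/
noncomputable def CH {ι : Type*} [Fintype ι] (ξ : ℝ) (μ ν : ι → ℝ) : ℝ :=
  ∑ i, (ξ * μ i + (1 - ξ) * ν i - μ i ^ ξ * ν i ^ (1 - ξ))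

/-- The Chernoff–Hellinger divergence `Δ_+(μ,ν) = max_{ξ ∈ [0,1]} CH_ξ(μ,ν)`. -/
noncomputable def DeltaPlus {ι : Type*} [Fintype ι] (μ ν : ι → ℝ) : ℝ :=
  sSup ((fun ξ => CH ξ μ ν) '' Set.Icc (0 : ℝ) 1)

/-- `θ_i = (ρ_r P_{ri}, ρ_r (1 − P_{ri}))_{r ∈ [k]}`. -/
noncomputable def theta {k : ℕ} (ρ : Fin k → ℝ) (P : Matrix (Fin k) (Fin k) ℝ)
    (i : Fin k) : Fin k × Bool → ℝ :=
  fun p => if p.2 then ρ p.1 * (1 - P p.1 i) else ρ p.1 * P p.1 i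

/-- `w* = (ln(P_{ri}/P_{rj}), ln((1−P_{ri})/(1−P_{rj})))_{r ∈ [k]}`. -/
noncomputable def wstar {k : ℕ} (P : Matrix (Fin k) (Fin k) ℝ) (i j : Fin k) :
    EuclideanSpace ℝ (Fin k × Bool) :=
  (WithLp.equiv 2 (Fin k × Bool → ℝ)).symm fun p =>
    if p.2 then Real.log ((1 - P p.1 i) / (1 - P p.1 j))
    else Real.log (P p.1 i / P p.1 j)

lemma Dfun_nonneg (x a : ℝ) (hx : 0 ≤ x) (ha : 0 < a) :
    0 ≤ x * Real.log (x / a) - x + a := by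
  rcases eq_or_lt_of_le hx with h | h
  · simp [← h]; linarith
  · have h1 : Real.log (a / x) ≤ a / x - 1 :=
      Real.log_le_sub_one_of_pos (by positivity)
    have h2 : Real.log (a / x) = Real.log a - Real.log x :=
      Real.log_div ha.ne' h.ne'
    have h3 : Real.log (x / a) = Real.log x - Real.log a :=
      Real.log_div h.ne' ha.ne'
    have h4 : x * Real.log (x / a) ≥ x * (1 - a / x) := by
      have := mul_le_mul_of_nonneg_left h1 hx
      nlinarith
    have h5 : x * (1 - a / x) = x - a := by field_simp
    linarith

lemma Dfun_pos (x a : ℝ) (hx : 0 ≤ x) (ha : 0 < a) (hxa : x ≠ a) :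
    0 < x * Real.log (x / a) - x + a := by
  rcases eq_or_lt_of_le hx with h | h
  · simp [← h]; linarith
  · have h1 : Real.log (a / x) < a / x - 1 := by
      apply Real.log_lt_sub_one_of_pos (by positivity)
      intro hc
      apply hxa
      field_simp at hc
      linarith
    have h3 : Real.log (x / a) = -Real.log (a / x) := by
      rw [Real.log_div ha.ne' h.ne', Real.log_div h.ne' ha.ne']; ring
    have h4 : x * Real.log (x / a) > x * (1 - a / x) := by
      rw [h3]
      have := mul_lt_mul_of_pos_left h1 h
      nlinarith
    have h5 : x * (1 - a / x) = x - a := by field_simp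
    linarith

lemma Dfun_le (x a : ℝ) (hx : 0 ≤ x) (ha : 0 < a) :
    x * Real.log (x / a) - x + a ≤ (x - a) ^ 2 / a := by
  rcases eq_or_lt_of_le hx with h | h
  · simp [← h]
    rw [sq]; field_simp; norm_num
  · have h1 : Real.log (x / a) ≤ x / a - 1 :=
      Real.log_le_sub_one_of_pos (by positivity)
    have h4 : x * Real.log (x / a) ≤ x * (x / a - 1) :=
      mul_le_mul_of_nonneg_left h1 hx
    have h5 : x * (x / a - 1) - x + a = (x - a) ^ 2 / a := by field_simp; ring
    linarith

lemma log_shift (x c : ℝ) (hx : 0 ≤ x) (hc : 0 < c) :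
    x * Real.log (x / (Real.exp 1 * c)) = x * Real.log (x / c) - x := by
  rcases eq_or_lt_of_le hx with h | h
  · simp [← h]
  · have : Real.log (x / (Real.exp 1 * c)) = Real.log (x / c) - 1 := by
      rw [Real.log_div h.ne' (by positivity), Real.log_mul (Real.exp_ne_zero 1) hc.ne',
        Real.log_exp, Real.log_div h.ne' hc.ne']
      ring
    rw [this]; ring

lemma log_split (x a c : ℝ) (hx : 0 ≤ x) (ha : 0 < a) (hc : 0 < c) :
    x * Real.log (x / c) = x * Real.log (x / a) + x * Real.log (a / c) := by
  rcases eq_or_lt_of_le hx with h | h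
  · simp [← h]
  · rw [Real.log_div h.ne' hc.ne', Real.log_div h.ne' ha.ne', Real.log_div ha.ne' hc.ne']
    ring

lemma chern_main {ι : Type*} [Fintype ι] [Nonempty ι] (μ ν : ι → ℝ)
    (hμ : ∀ p, 0 < μ p) (hν : ∀ p, 0 < ν p)
    (hμs : ∑ p, μ p = 1) (hνs : ∑ p, ν p = 1) (hne : ∃ p, μ p ≠ ν p) :
    ∃ ξ : ℝ, ξ ∈ Set.Ioo (0:ℝ) 1 ∧
      (∑ p, ν p * (Real.exp (ξ * (Real.log (μ p) - Real.log (ν p))) *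
        (Real.log (μ p) - Real.log (ν p))) = 0) ∧
      DeltaPlus μ ν = 1 - ∑ p, ν p * Real.exp (ξ * (Real.log (μ p) - Real.log (ν p))) ∧
      ∑ p, ν p * Real.exp (ξ * (Real.log (μ p) - Real.log (ν p))) < 1 := by
  set w : ι → ℝ := fun p => Real.log (μ p) - Real.log (ν p) with hw
  set F : ℝ → ℝ := fun ξ => ∑ p, ν p * Real.exp (ξ * w p) with hF
  have hF0 : F 0 = 1 := by simp [hF, hνs]
  have hterm1 : ∀ p, ν p * Real.exp ((1:ℝ) * w p) = μ p := by
    intro p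
    rw [one_mul, hw, Real.exp_sub, Real.exp_log (hμ p), Real.exp_log (hν p)]
    rw [mul_div_assoc']
    exact mul_div_cancel_left₀ _ (hν p).ne'
  have hF1 : F 1 = 1 := by
    rw [hF]
    simp only [hterm1]
    exact hμs
  have hpoint : ∀ p, ν p * Real.exp ((1/2 : ℝ) * w p) ≤ (μ p + ν p) / 2 := by
    intro p
    have h1 : ν p * Real.exp ((1/2 : ℝ) * w p) = Real.sqrt (μ p) * Real.sqrt (ν p) := by
      rw [Real.sqrt_eq_rpow, Real.sqrt_eq_rpow, Real.rpow_def_of_pos (hμ p),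
        Real.rpow_def_of_pos (hν p), ← Real.exp_add, hw]
      nth_rewrite 1 [← Real.exp_log (hν p)]
      rw [← Real.exp_add]
      ring_nf
    have h2 : Real.sqrt (μ p) ^ 2 = μ p := Real.sq_sqrt (hμ p).le
    have h3 : Real.sqrt (ν p) ^ 2 = ν p := Real.sq_sqrt (hν p).le
    nlinarith [sq_nonneg (Real.sqrt (μ p) - Real.sqrt (ν p))]
  have hFhalf : F (1/2) < 1 := by
    obtain ⟨p0, hp0⟩ := hne
    have hstrict : ν p0 * Real.exp ((1/2 : ℝ) * w p0) < (μ p0 + ν p0) / 2 := by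
      have h1 : ν p0 * Real.exp ((1/2 : ℝ) * w p0) = Real.sqrt (μ p0) * Real.sqrt (ν p0) := by
        rw [Real.sqrt_eq_rpow, Real.sqrt_eq_rpow, Real.rpow_def_of_pos (hμ p0),
          Real.rpow_def_of_pos (hν p0), ← Real.exp_add, hw]
        nth_rewrite 1 [← Real.exp_log (hν p0)]
        rw [← Real.exp_add]
        ring_nf
      have h2 : Real.sqrt (μ p0) ^ 2 = μ p0 := Real.sq_sqrt (hμ p0).le
      have h3 : Real.sqrt (ν p0) ^ 2 = ν p0 := Real.sq_sqrt (hν p0).le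
      have h4 : Real.sqrt (μ p0) ≠ Real.sqrt (ν p0) := fun hc => hp0 (by
        rw [← h2, ← h3, hc])
      nlinarith [sq_nonneg (Real.sqrt (μ p0) - Real.sqrt (ν p0)),
        sq_pos_of_ne_zero (sub_ne_zero.mpr h4)]
    have hsum : F (1/2) < ∑ p, (μ p + ν p) / 2 := by
      rw [hF]
      exact Finset.sum_lt_sum (fun p _ => hpoint p) ⟨p0, Finset.mem_univ _, hstrict⟩
    have : ∑ p, (μ p + ν p) / 2 = 1 := by
      rw [← Finset.sum_div, Finset.sum_add_distrib, hμs, hνs]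
      norm_num
    linarith
  have hFcont : Continuous F := by
    apply continuous_finset_sum
    intro p _
    exact continuous_const.mul (Real.continuous_exp.comp (continuous_id.mul continuous_const))
  obtain ⟨ξ, hξmem, hξmin⟩ := isCompact_Icc.exists_isMinOn
    (Set.nonempty_Icc.mpr zero_le_one) hFcont.continuousOn
  have hFξ : F ξ < 1 := lt_of_le_of_lt
    (hξmin (Set.mem_Icc.mpr ⟨by norm_num, by norm_num⟩)) hFhalf
  have hξIoo : ξ ∈ Set.Ioo (0:ℝ) 1 := by
    rcases Set.mem_Icc.mp hξmem with ⟨h0, h1⟩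
    constructor
    · rcases eq_or_lt_of_le h0 with h | h
      · exfalso; rw [← h] at hFξ; rw [hF0] at hFξ; exact lt_irrefl _ hFξ
      · exact h
    · rcases eq_or_lt_of_le h1 with h | h
      · exfalso; rw [h] at hFξ; rw [hF1] at hFξ; exact lt_irrefl _ hFξ
      · exact h
  have hderiv : HasDerivAt F (∑ p, ν p * (Real.exp (ξ * w p) * w p)) ξ := by
    rw [hF]
    apply HasDerivAt.fun_sum
    intro p _
    exact ((hasDerivAt_mul_const (w p)).exp).const_mul (ν p)
  have hlocmin : IsLocalMin F ξ := hξmin.isLocalMin (Icc_mem_nhds hξIoo.1 hξIoo.2)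
  have hderiv0 : ∑ p, ν p * (Real.exp (ξ * w p) * w p) = 0 :=
    hlocmin.hasDerivAt_eq_zero hderiv
  have hCH : ∀ ξ' : ℝ, CH ξ' μ ν = 1 - F ξ' := by
    intro ξ'
    have hterm : ∀ p, μ p ^ ξ' * ν p ^ (1 - ξ') = ν p * Real.exp (ξ' * w p) := by
      intro p
      rw [Real.rpow_def_of_pos (hμ p), Real.rpow_def_of_pos (hν p), ← Real.exp_add]
      nth_rewrite 2 [← Real.exp_log (hν p)]
      rw [← Real.exp_add, hw]
      ring_nf
    unfold CH
    rw [hF]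
    have : ∀ p ∈ Finset.univ, ξ' * μ p + (1 - ξ') * ν p - μ p ^ ξ' * ν p ^ (1 - ξ')
        = ξ' * μ p + (1 - ξ') * ν p - ν p * Real.exp (ξ' * w p) := by
      intro p _; rw [hterm p]
    rw [Finset.sum_congr rfl this]
    rw [Finset.sum_sub_distrib, Finset.sum_add_distrib, ← Finset.mul_sum, ← Finset.mul_sum,
      hμs, hνs]
    ring
  have hDP : DeltaPlus μ ν = 1 - F ξ := by
    unfold DeltaPlus
    rw [← hCH ξ]
    apply IsGreatest.csSup_eq
    constructor
    · exact ⟨ξ, hξmem, rfl⟩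
    · rintro y ⟨ξ', hξ', rfl⟩
      show CH ξ' μ ν ≤ CH ξ μ ν
      rw [hCH ξ', hCH ξ]
      have hmm : F ξ ≤ F ξ' := hξmin hξ'
      linarith
  exact ⟨ξ, hξIoo, hderiv0, hDP, hFξ⟩

set_option maxHeartbeats 1600000 in
theorem stmt5 (k : ℕ) (hk : 1 ≤ k) (ρ : Fin k → ℝ)
    (hρ : ∀ r, ρ r ∈ Set.Ioo (0 : ℝ) 1) (hρsum : ∑ r, ρ r = 1)
    (P : Matrix (Fin k) (Fin k) ℝ) (hPsymm : P.IsSymm)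
    (hP : ∀ r s, P r s ∈ Set.Ioo (0 : ℝ) 1)
    (i j : Fin k) (hij : i ≠ j) (hPij : ∃ r, P r i ≠ P r j)
    (t0 : ℝ) (ht0 : t0 = 1 / DeltaPlus (theta ρ P i) (theta ρ P j)) :
    ∃ xs : EuclideanSpace ℝ (Fin k × Bool),
      -- (a) the two dissonance ranges intersect at the single point `xs`
      DR ρ P i (1 / t0) ∩ DR ρ P j (1 / t0) = {xs} ∧
      -- (b) with `H = {x : ⟨w*, x − xs⟩ ≥ 0}`, `DR_{1/t0}(i) ⊆ H` and `DR_{1/t0}(j) ∩ H = {xs}`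
      DR ρ P i (1 / t0) ⊆ {x | 0 ≤ ⟪wstar P i j, x - xs⟫} ∧
      DR ρ P j (1 / t0) ∩ {x | 0 ≤ ⟪wstar P i j, x - xs⟫} = {xs} ∧
      -- (c) balls tangent at `xs` inside each dissonance range
      (∃ r > (0 : ℝ),
        Metric.ball (xs + r • wstar P i j) (r * ‖wstar P i j‖) ⊆ DR ρ P i (1 / t0) ∧
        Metric.ball (xs - r • wstar P i j) (r * ‖wstar P i j‖) ⊆ DR ρ P j (1 / t0)) ∧
      -- (d) below `t0` the intersection has non-empty interior
      (∀ t : ℝ, 0 < t → t < t0 →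
        (interior (DR ρ P i (1 / t) ∩ DR ρ P j (1 / t))).Nonempty) := by
  classical
  haveI : Nonempty (Fin k) := ⟨⟨0, hk⟩⟩
  have hθpos : ∀ (c : Fin k) (p : Fin k × Bool), 0 < theta ρ P c p := by
    intro c ⟨r, b⟩
    cases b
    · show 0 < ρ r * P r c
      exact mul_pos (hρ r).1 (hP r c).1
    · show 0 < ρ r * (1 - P r c)
      exact mul_pos (hρ r).1 (by linarith [(hP r c).2])
  have hθsum : ∀ c : Fin k, ∑ p, theta ρ P c p = 1 := by
    intro c
    rw [Fintype.sum_prod_type]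
    have hb : ∀ r : Fin k, ∑ b : Bool, theta ρ P c (r, b) = ρ r := by
      intro r
      rw [Fintype.sum_bool]
      show ρ r * (1 - P r c) + ρ r * P r c = ρ r
      ring
    rw [Finset.sum_congr rfl (fun r _ => hb r), hρsum]
  have hne : ∃ p : Fin k × Bool, theta ρ P i p ≠ theta ρ P j p := by
    obtain ⟨r, hr⟩ := hPij
    refine ⟨(r, false), fun hc => hr ?_⟩
    have : ρ r * P r i = ρ r * P r j := hc
    exact mul_left_cancel₀ (hρ r).1.ne' this
  set w : Fin k × Bool → ℝ :=
    fun p => Real.log (theta ρ P i p) - Real.log (theta ρ P j p) with hwdef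
  obtain ⟨ξ, hξIoo, horth, hDP, hFlt⟩ :=
    chern_main (theta ρ P i) (theta ρ P j) (hθpos i) (hθpos j) (hθsum i) (hθsum j) hne
  set xf : Fin k × Bool → ℝ := fun p => theta ρ P j p * Real.exp (ξ * w p) with hxfdef
  have hxfpos : ∀ p, 0 < xf p := fun p => mul_pos (hθpos j p) (Real.exp_pos _)
  set xs : EuclideanSpace ℝ (Fin k × Bool) :=
    (WithLp.equiv 2 (Fin k × Bool → ℝ)).symm xf with hxsdef
  have hxs : ∀ p, xs p = xf p := fun p => rfl
  have hδ : 1 / t0 = 1 - ∑ p, xf p := by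
    rw [ht0, one_div_one_div]
    exact hDP
  have horth' : ∑ p, xf p * w p = 0 := by
    rw [← horth]
    apply Finset.sum_congr rfl
    intro p _
    show xf p * w p = theta ρ P j p * (Real.exp (ξ * w p) * w p)
    simp only [hxfdef]
    ring
  have hwstar : ∀ p, wstar P i j p = w p := by
    intro ⟨r, b⟩
    cases b
    · show Real.log (P r i / P r j)
        = Real.log (ρ r * P r i) - Real.log (ρ r * P r j)
      rw [Real.log_div (hP r i).1.ne' (hP r j).1.ne',
        Real.log_mul (hρ r).1.ne' (hP r i).1.ne',
        Real.log_mul (hρ r).1.ne' (hP r j).1.ne']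
      ring
    · have h1 : (0:ℝ) < 1 - P r i := by linarith [(hP r i).2]
      have h2 : (0:ℝ) < 1 - P r j := by linarith [(hP r j).2]
      show Real.log ((1 - P r i) / (1 - P r j))
        = Real.log (ρ r * (1 - P r i)) - Real.log (ρ r * (1 - P r j))
      rw [Real.log_div h1.ne' h2.ne',
        Real.log_mul (hρ r).1.ne' h1.ne',
        Real.log_mul (hρ r).1.ne' h2.ne']
      ring
  have hlogxf : ∀ p, Real.log (xf p) = Real.log (theta ρ P j p) + ξ * w p := by
    intro p
    show Real.log (theta ρ P j p * Real.exp (ξ * w p)) = _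
    rw [Real.log_mul (hθpos j p).ne' (Real.exp_ne_zero _), Real.log_exp]
  have hslopei : ∀ p, Real.log (xf p / theta ρ P i p) = (ξ - 1) * w p := by
    intro p
    rw [Real.log_div (hxfpos p).ne' (hθpos i p).ne', hlogxf p]
    show Real.log (theta ρ P j p)
        + ξ * (Real.log (theta ρ P i p) - Real.log (theta ρ P j p))
        - Real.log (theta ρ P i p)
      = (ξ - 1) * (Real.log (theta ρ P i p) - Real.log (theta ρ P j p))
    ring
  have hslopej : ∀ p, Real.log (xf p / theta ρ P j p) = ξ * w p := by
    intro p
    rw [Real.log_div (hxfpos p).ne' (hθpos j p).ne', hlogxf p]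
    ring
  -- the master expansion of eta
  have hmaster : ∀ (c : Fin k) (s : ℝ),
      (∀ p, Real.log (xf p / theta ρ P c p) = s * w p) →
      ∀ x : EuclideanSpace ℝ (Fin k × Bool), (∀ p, 0 ≤ x p) →
      eta ρ P c x = (∑ p, (x p * Real.log (x p / xf p) - x p + xf p))
        + s * (∑ p, w p * (x p - xf p)) + (1 - ∑ p, xf p) := by
    intro c s hs x hx
    have h1 : eta ρ P c x
        = (∑ p, (x p * Real.log (x p / theta ρ P c p) - x p)) + 1 := by
      unfold eta
      congr 1
      rw [Fintype.sum_prod_type]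
      apply Finset.sum_congr rfl
      intro r _
      rw [Fintype.sum_bool]
      have hf : x (r,false) * Real.log (x (r,false) / (Real.exp 1 * ρ r * P r c))
          = x (r,false) * Real.log (x (r,false) / theta ρ P c (r,false)) - x (r,false) := by
        have he : Real.exp 1 * ρ r * P r c = Real.exp 1 * (theta ρ P c (r, false)) := by
          show _ = Real.exp 1 * (ρ r * P r c); ring
        rw [he, log_shift _ _ (hx _) (hθpos c (r,false))]
      have ht : x (r,true) * Real.log (x (r,true) / (Real.exp 1 * ρ r * (1 - P r c)))
          = x (r,true) * Real.log (x (r,true) / theta ρ P c (r,true)) - x (r,true) := by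
        have he : Real.exp 1 * ρ r * (1 - P r c) = Real.exp 1 * (theta ρ P c (r, true)) := by
          show _ = Real.exp 1 * (ρ r * (1 - P r c)); ring
        rw [he, log_shift _ _ (hx _) (hθpos c (r,true))]
      rw [hf, ht]
      ring
    have h2 : ∀ p, x p * Real.log (x p / theta ρ P c p) - x p
        = (x p * Real.log (x p / xf p) - x p + xf p) + s * w p * x p - xf p := by
      intro p
      have hsplit := log_split (x p) (xf p) (theta ρ P c p) (hx p) (hxfpos p) (hθpos c p)
      rw [hs p] at hsplit
      rw [hsplit]
      ring
    rw [h1, Finset.sum_congr rfl (fun p _ => h2 p)]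
    have h3 : ∑ p, ((x p * Real.log (x p / xf p) - x p + xf p) + s * w p * x p - xf p)
        = (∑ p, (x p * Real.log (x p / xf p) - x p + xf p))
          + s * (∑ p, w p * x p) - ∑ p, xf p := by
      rw [Finset.sum_sub_distrib, Finset.sum_add_distrib, Finset.mul_sum]
      congr 2
      apply Finset.sum_congr rfl
      intros; ring
    have h4 : ∑ p, w p * x p = ∑ p, w p * (x p - xf p) := by
      have h5 : ∑ p, w p * (x p - xf p) = (∑ p, w p * x p) - ∑ p, w p * xf p := by
        rw [← Finset.sum_sub_distrib]
        apply Finset.sum_congr rfl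
        intros; ring
      have h6 : ∑ p, w p * xf p = 0 := by
        rw [← horth']
        apply Finset.sum_congr rfl
        intros; ring
      rw [h5, h6, sub_zero]
    rw [h3, h4]
    ring
  have hetaI : ∀ x : EuclideanSpace ℝ (Fin k × Bool), (∀ p, 0 ≤ x p) →
      eta ρ P i x = (∑ p, (x p * Real.log (x p / xf p) - x p + xf p))
        + (ξ - 1) * (∑ p, w p * (x p - xf p)) + 1 / t0 := by
    intro x hx
    rw [hmaster i (ξ - 1) hslopei x hx, ← hδ]
  have hetaJ : ∀ x : EuclideanSpace ℝ (Fin k × Bool), (∀ p, 0 ≤ x p) →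
      eta ρ P j x = (∑ p, (x p * Real.log (x p / xf p) - x p + xf p))
        + ξ * (∑ p, w p * (x p - xf p)) + 1 / t0 := by
    intro x hx
    rw [hmaster j ξ hslopej x hx, ← hδ]
  have hD0 : ∀ x : EuclideanSpace ℝ (Fin k × Bool), (∀ p, 0 ≤ x p) →
      0 ≤ ∑ p, (x p * Real.log (x p / xf p) - x p + xf p) :=
    fun x hx => Finset.sum_nonneg fun p _ => Dfun_nonneg _ _ (hx p) (hxfpos p)
  have hDeq : ∀ x : EuclideanSpace ℝ (Fin k × Bool), (∀ p, 0 ≤ x p) →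
      (∑ p, (x p * Real.log (x p / xf p) - x p + xf p)) ≤ 0 → x = xs := by
    intro x hx hle
    have hsum0 : ∑ p, (x p * Real.log (x p / xf p) - x p + xf p) = 0 :=
      le_antisymm hle (hD0 x hx)
    have hall := (Finset.sum_eq_zero_iff_of_nonneg
      (fun p _ => Dfun_nonneg (x p) (xf p) (hx p) (hxfpos p))).1 hsum0
    apply (WithLp.equiv 2 (Fin k × Bool → ℝ)).injective
    funext p
    show x p = xf p
    by_contra hne'
    exact (Dfun_pos (x p) (xf p) (hx p) (hxfpos p) hne').ne'
      (hall p (Finset.mem_univ p))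
  have hDxs : ∑ p, (xs p * Real.log (xs p / xf p) - xs p + xf p) = 0 := by
    apply Finset.sum_eq_zero
    intro p _
    show xf p * Real.log (xf p / xf p) - xf p + xf p = 0
    rw [div_self (hxfpos p).ne', Real.log_one]
    ring
  have hSxs : ∑ p, w p * (xs p - xf p) = 0 := by
    apply Finset.sum_eq_zero
    intro p _
    show w p * (xf p - xf p) = 0
    simp
  have hxs0 : ∀ p, 0 ≤ xs p := fun p => (hxfpos p).le
  have hmemI : xs ∈ DR ρ P i (1 / t0) := by
    refine ⟨hxs0, ?_⟩
    rw [hetaI xs hxs0, hDxs, hSxs]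
    simp
  have hmemJ : xs ∈ DR ρ P j (1 / t0) := by
    refine ⟨hxs0, ?_⟩
    rw [hetaJ xs hxs0, hDxs, hSxs]
    simp
  have hinner : ∀ x : EuclideanSpace ℝ (Fin k × Bool),
      ⟪wstar P i j, x - xs⟫ = ∑ p, w p * (x p - xf p) := by
    intro x
    rw [PiLp.inner_apply]
    apply Finset.sum_congr rfl
    intro p _
    rw [RCLike.inner_apply, conj_trivial, PiLp.sub_apply, hwstar p, hxs p]
    ring
  have hnormsq : ∀ v : EuclideanSpace ℝ (Fin k × Bool), ‖v‖^2 = ∑ p, (v p)^2 := by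
    intro v
    rw [EuclideanSpace.norm_eq, Real.sq_sqrt (by positivity)]
    apply Finset.sum_congr rfl
    intros p _
    rw [Real.norm_eq_abs, sq_abs]
  have hcoord : ∀ (v : EuclideanSpace ℝ (Fin k × Bool)) (p : Fin k × Bool),
      |v p| ≤ ‖v‖ := by
    intro v p
    rw [EuclideanSpace.norm_eq, ← Real.sqrt_sq_eq_abs]
    apply Real.sqrt_le_sqrt
    calc (v p)^2 ≤ ∑ q, (v q)^2 :=
          Finset.single_le_sum (fun q _ => sq_nonneg (v q)) (Finset.mem_univ p)
      _ = ∑ q, ‖v q‖^2 := by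
          apply Finset.sum_congr rfl
          intros q _
          rw [Real.norm_eq_abs, sq_abs]
  obtain ⟨pm, -, hpm⟩ := Finset.exists_min_image Finset.univ xf
    ⟨(⟨0, hk⟩, false), Finset.mem_univ _⟩
  set m := xf pm with hmdef
  have hmpos : 0 < m := hxfpos pm
  have hmle : ∀ p, m ≤ xf p := fun p => hpm p (Finset.mem_univ p)
  have hDle : ∀ x : EuclideanSpace ℝ (Fin k × Bool), (∀ p, 0 ≤ x p) →
      (∑ p, (x p * Real.log (x p / xf p) - x p + xf p)) ≤ ‖x - xs‖^2 / m := by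
    intro x hx
    have h1 : ∀ p : Fin k × Bool, x p * Real.log (x p / xf p) - x p + xf p
        ≤ (x p - xf p)^2 / m := by
      intro p
      calc x p * Real.log (x p / xf p) - x p + xf p
          ≤ (x p - xf p)^2 / xf p := Dfun_le _ _ (hx p) (hxfpos p)
        _ ≤ (x p - xf p)^2 / m :=
            div_le_div_of_nonneg_left (sq_nonneg _) hmpos (hmle p)
    calc (∑ p, (x p * Real.log (x p / xf p) - x p + xf p))
        ≤ ∑ p, (x p - xf p)^2 / m := Finset.sum_le_sum (fun p _ => h1 p)
      _ = (∑ p, (x p - xf p)^2) / m := by rw [Finset.sum_div]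
      _ = ‖x - xs‖^2 / m := by
          rw [hnormsq (x - xs)]
          have hcg : ∑ p : Fin k × Bool, (x p - xf p)^2 = ∑ p : Fin k × Bool, ((x - xs) p)^2 := by
            apply Finset.sum_congr rfl
            intro p _
            rw [PiLp.sub_apply, hxs p]
          rw [hcg]
  refine ⟨xs, ?_, ?_, ?_, ?_, ?_⟩
  -- (a)
  · apply Set.eq_singleton_iff_unique_mem.mpr
    refine ⟨⟨hmemI, hmemJ⟩, ?_⟩
    rintro x ⟨⟨hx0, hxi⟩, -, hxj⟩
    rw [hetaI x hx0] at hxi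
    rw [hetaJ x hx0] at hxj
    apply hDeq x hx0
    have h1 : (∑ p, (x p * Real.log (x p / xf p) - x p + xf p))
        + (ξ - 1) * (∑ p, w p * (x p - xf p)) ≤ 0 := by linarith
    have h2 : (∑ p, (x p * Real.log (x p / xf p) - x p + xf p))
        + ξ * (∑ p, w p * (x p - xf p)) ≤ 0 := by linarith
    have h3 := mul_le_mul_of_nonneg_left h1 hξIoo.1.le
    have h4 := mul_le_mul_of_nonneg_left h2 (by linarith [hξIoo.2] : (0:ℝ) ≤ 1 - ξ)
    nlinarith [h3, h4]
  -- (b) part 1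
  · rintro x ⟨hx0, hxi⟩
    rw [Set.mem_setOf_eq, hinner x]
    rw [hetaI x hx0] at hxi
    nlinarith [hD0 x hx0, hξIoo.2, hxi]
  -- (b) part 2
  · apply Set.eq_singleton_iff_unique_mem.mpr
    constructor
    · refine ⟨hmemJ, ?_⟩
      show 0 ≤ ⟪wstar P i j, xs - xs⟫
      simp
    · rintro x ⟨⟨hx0, hxj⟩, hxH⟩
      rw [Set.mem_setOf_eq, hinner x] at hxH
      rw [hetaJ x hx0] at hxj
      apply hDeq x hx0
      nlinarith [hξIoo.1, hxH, hxj]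
  -- (c)
  · have hWnn : (0:ℝ) ≤ ‖wstar P i j‖ := norm_nonneg _
    set r := min (m * (1 - ξ)/2) (min (m * ξ/2) (m/(2*‖wstar P i j‖+1))) with hrdef
    have hrpos : 0 < r := by
      have h1 := hξIoo.1
      have h2 := hξIoo.2
      apply lt_min (by nlinarith) (lt_min (by nlinarith) (by positivity))
    have hr1 : r ≤ m * (1 - ξ)/2 := min_le_left _ _
    have hr2 : r ≤ m * ξ/2 := le_trans (min_le_right _ _) (min_le_left _ _)
    have hr3 : r * (2*‖wstar P i j‖+1) ≤ m := by
      have ha := min_le_right (m * (1 - ξ)/2) (min (m * ξ/2) (m/(2*‖wstar P i j‖+1)))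
      have hb := min_le_right (m * ξ/2) (m/(2*‖wstar P i j‖+1))
      have hc : r ≤ m/(2*‖wstar P i j‖+1) := le_trans ha hb
      exact (le_div_iff₀ (by positivity)).mp hc
    have hsmul : ‖r • wstar P i j‖ = r * ‖wstar P i j‖ := by
      rw [norm_smul, Real.norm_eq_abs, abs_of_pos hrpos]
    refine ⟨r, hrpos, ?_, ?_⟩
    · -- ball for i
      intro y hy
      rw [Metric.mem_ball, dist_eq_norm] at hy
      have hy' : ‖(y - xs) - r • wstar P i j‖ < r * ‖wstar P i j‖ := by
        have : y - (xs + r • wstar P i j) = (y - xs) - r • wstar P i j := by abel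
        rwa [this] at hy
      have hsq : ‖(y - xs) - r • wstar P i j‖^2 < (r * ‖wstar P i j‖)^2 :=
        pow_lt_pow_left₀ hy' (norm_nonneg _) two_ne_zero
      have hexp : ‖(y - xs) - r • wstar P i j‖^2
          = ‖y - xs‖^2 - 2*(r*⟪wstar P i j, y - xs⟫) + (r * ‖wstar P i j‖)^2 := by
        rw [norm_sub_sq_real, real_inner_smul_right, real_inner_comm, hsmul]
        try ring
      have hkey : ‖y - xs‖^2 < 2*r*⟪wstar P i j, y - xs⟫ := by nlinarith [hsq, hexp]
      have hyxs : ‖y - xs‖ < m := by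
        have h5 : ‖y - xs‖ ≤ ‖(y - xs) - r • wstar P i j‖ + ‖r • wstar P i j‖ := by
          calc ‖y - xs‖ = ‖((y - xs) - r • wstar P i j) + r • wstar P i j‖ := by
                congr 1; abel
            _ ≤ _ := norm_add_le _ _
        rw [hsmul] at h5
        nlinarith [hrpos, hy', hr3]
      have hy0 : ∀ p, 0 ≤ y p := by
        intro p
        have h8 : |y p - xf p| ≤ ‖y - xs‖ := by
          have := hcoord (y - xs) p
          rwa [PiLp.sub_apply, hxs p] at this
        have h9 := (abs_le.mp h8).1
        linarith [hmle p]
      refine ⟨hy0, ?_⟩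
      rw [hetaI y hy0, ← hinner y]
      have hD := hDle y hy0
      have hIpos : 0 < ⟪wstar P i j, y - xs⟫ := by nlinarith [hkey, sq_nonneg ‖y - xs‖, hrpos]
      have h10 : (∑ p, (y p * Real.log (y p / xf p) - y p + xf p)) * m ≤ ‖y - xs‖^2 :=
        (le_div_iff₀ hmpos).mp hD
      have h11 : 2*r*⟪wstar P i j, y - xs⟫ ≤ m*(1-ξ)*⟪wstar P i j, y - xs⟫ :=
        mul_le_mul_of_nonneg_right (by linarith) hIpos.le
      nlinarith [h10, hkey, h11, hmpos]
    · -- ball for j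
      intro y hy
      rw [Metric.mem_ball, dist_eq_norm] at hy
      have hy' : ‖(y - xs) + r • wstar P i j‖ < r * ‖wstar P i j‖ := by
        have : y - (xs - r • wstar P i j) = (y - xs) + r • wstar P i j := by abel
        rwa [this] at hy
      have hsq : ‖(y - xs) + r • wstar P i j‖^2 < (r * ‖wstar P i j‖)^2 :=
        pow_lt_pow_left₀ hy' (norm_nonneg _) two_ne_zero
      have hexp : ‖(y - xs) + r • wstar P i j‖^2
          = ‖y - xs‖^2 + 2*(r*⟪wstar P i j, y - xs⟫) + (r * ‖wstar P i j‖)^2 := by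
        rw [norm_add_sq_real, real_inner_smul_right, real_inner_comm, hsmul]
        try ring
      have hkey : ‖y - xs‖^2 < -(2*r*⟪wstar P i j, y - xs⟫) := by nlinarith [hsq, hexp]
      have hyxs : ‖y - xs‖ < m := by
        have h5 : ‖y - xs‖ ≤ ‖(y - xs) + r • wstar P i j‖ + ‖r • wstar P i j‖ := by
          calc ‖y - xs‖ = ‖((y - xs) + r • wstar P i j) - r • wstar P i j‖ := by
                congr 1; abel
            _ ≤ _ := norm_sub_le _ _
        rw [hsmul] at h5
        nlinarith [hrpos, hy', hr3]
      have hy0 : ∀ p, 0 ≤ y p := by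
        intro p
        have h8 : |y p - xf p| ≤ ‖y - xs‖ := by
          have := hcoord (y - xs) p
          rwa [PiLp.sub_apply, hxs p] at this
        have h9 := (abs_le.mp h8).1
        linarith [hmle p]
      refine ⟨hy0, ?_⟩
      rw [hetaJ y hy0, ← hinner y]
      have hD := hDle y hy0
      have hIneg : ⟪wstar P i j, y - xs⟫ < 0 := by
        nlinarith [hkey, sq_nonneg ‖y - xs‖, hrpos]
      have h10 : (∑ p, (y p * Real.log (y p / xf p) - y p + xf p)) * m ≤ ‖y - xs‖^2 :=
        (le_div_iff₀ hmpos).mp hD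
      have h11 : 2*r*(-⟪wstar P i j, y - xs⟫) ≤ m*ξ*(-⟪wstar P i j, y - xs⟫) :=
        mul_le_mul_of_nonneg_right (by linarith) (by linarith)
      nlinarith [h10, hkey, h11, hmpos]
  -- (d)
  · intro t ht htlt
    have ht0pos : 0 < t0 := lt_trans ht htlt
    have hδt : 1/t0 < 1/t := one_div_lt_one_div_of_lt ht htlt
    have hKpos : (0:ℝ) < m * ‖wstar P i j‖ + 1 + m := by positivity
    set ε := min (m/2) (min 1 ((1/t - 1/t0) * m / (m * ‖wstar P i j‖ + 1 + m))) with hεdef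
    have hεpos : 0 < ε := by
      apply lt_min (by positivity)
      apply lt_min one_pos
      apply div_pos _ hKpos
      have : 0 < 1/t - 1/t0 := by linarith
      positivity
    have hε1 : ε ≤ m/2 := min_le_left _ _
    have hε2 : ε ≤ 1 := le_trans (min_le_right _ _) (min_le_left _ _)
    have hε3 : ε * (m * ‖wstar P i j‖ + 1 + m) ≤ (1/t - 1/t0) * m := by
      have ha := min_le_right (m/2) (min 1 ((1/t - 1/t0) * m / (m * ‖wstar P i j‖ + 1 + m)))
      have hb := min_le_right (1:ℝ) ((1/t - 1/t0) * m / (m * ‖wstar P i j‖ + 1 + m))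
      have hc : ε ≤ (1/t - 1/t0) * m / (m * ‖wstar P i j‖ + 1 + m) := le_trans ha hb
      exact (le_div_iff₀ hKpos).mp hc
    have hball : Metric.ball xs ε ⊆ DR ρ P i (1/t) ∩ DR ρ P j (1/t) := by
      intro y hy
      rw [Metric.mem_ball, dist_eq_norm] at hy
      have hy0 : ∀ p, 0 ≤ y p := by
        intro p
        have h8 : |y p - xf p| ≤ ‖y - xs‖ := by
          have := hcoord (y - xs) p
          rwa [PiLp.sub_apply, hxs p] at this
        have h9 := (abs_le.mp h8).1
        linarith [hmle p]
      have hD := hDle y hy0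
      have h10 : (∑ p, (y p * Real.log (y p / xf p) - y p + xf p)) * m ≤ ‖y - xs‖^2 :=
        (le_div_iff₀ hmpos).mp hD
      have hNε : ‖y - xs‖^2 ≤ ε := by
        nlinarith [norm_nonneg (y - xs), hy, hε2]
      have habs : |⟪wstar P i j, y - xs⟫| ≤ ‖wstar P i j‖ * ε := by
        calc |⟪wstar P i j, y - xs⟫| ≤ ‖wstar P i j‖ * ‖y - xs‖ :=
              abs_real_inner_le_norm _ _
          _ ≤ ‖wstar P i j‖ * ε := mul_le_mul_of_nonneg_left hy.le (norm_nonneg _)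
      have hIub := le_abs_self ⟪wstar P i j, y - xs⟫
      have hIlb := neg_abs_le ⟪wstar P i j, y - xs⟫
      have hq1 : (ξ - 1) * ⟪wstar P i j, y - xs⟫ ≤ ‖wstar P i j‖ * ε := by
        nlinarith [habs, hIub, hIlb, hξIoo.1, hξIoo.2, abs_nonneg ⟪wstar P i j, y - xs⟫]
      have hq2 : ξ * ⟪wstar P i j, y - xs⟫ ≤ ‖wstar P i j‖ * ε := by
        nlinarith [habs, hIub, hIlb, hξIoo.1, hξIoo.2, abs_nonneg ⟪wstar P i j, y - xs⟫]
      constructor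
      · refine ⟨hy0, ?_⟩
        rw [hetaI y hy0, ← hinner y]
        nlinarith [h10, hNε, mul_le_mul_of_nonneg_right hq1 hmpos.le, hε3,
          mul_pos hεpos hmpos, hmpos]
      · refine ⟨hy0, ?_⟩
        rw [hetaJ y hy0, ← hinner y]
        nlinarith [h10, hNε, mul_le_mul_of_nonneg_right hq2 hmpos.le, hε3,
          mul_pos hεpos hmpos, hmpos]
    exact ⟨xs, interior_maximal hball Metric.isOpen_ball (Metric.mem_ball_self hεpos)⟩
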